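/- If W Q⁻¹ = c·I for some constant c > 0 and additionally all singular values of Q^{-1/2} U Q^{-1/2} are equal to ‖Q^{-1/2} U Q^{-1/2}‖_∞, then T[W] = R. -/

import Mathlib

open Matrix

open scoped ComplexOrder in
/-- The positive semidefinite square root of a positive semidefinite matrix, as defined in the
older Mathlib (removed since). -/
noncomputable def Matrix.PosSemidef.sqrt {n 𝕜 : Type*} [Fintype n] [DecidableEq n] [RCLike 𝕜]
    {A : Matrix n n 𝕜} (hA : A.PosSemidef) : Matrix n n 𝕜 :=
  hA.1.eigenvectorUnitary.1 * diagonal ((↑) ∘ Real.sqrt ∘ hA.1.eigenvalues) *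
  (star hA.1.eigenvectorUnitary : Matrix n n 𝕜)

open scoped ComplexOrder in
theorem Matrix.PosSemidef.posSemidef_sqrt {n 𝕜 : Type*} [Fintype n] [DecidableEq n] [RCLike 𝕜]
    {A : Matrix n n 𝕜} (hA : A.PosSemidef) : hA.sqrt.PosSemidef := by
  unfold Matrix.PosSemidef.sqrt
  have hd : (diagonal ((↑) ∘ Real.sqrt ∘ hA.1.eigenvalues : n → 𝕜)).PosSemidef := by
    rw [posSemidef_diagonal_iff]
    intro i
    simp only [Function.comp_apply, RCLike.ofReal_nonneg]
    exact Real.sqrt_nonneg _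
  have := hd.mul_mul_conjTranspose_same (hA.1.eigenvectorUnitary.1)
  simpa [Matrix.star_eq_conjTranspose] using this

noncomputable def traceNorm {n : ℕ} (A : Matrix (Fin n) (Fin n) ℝ) : ℝ :=
  (Matrix.posSemidef_conjTranspose_mul_self A).sqrt.trace

noncomputable def singVals {n : ℕ} (A : Matrix (Fin n) (Fin n) ℝ) : Fin n → ℝ :=
  (Matrix.posSemidef_conjTranspose_mul_self A).posSemidef_sqrt.1.eigenvalues

noncomputable def opNorm {n : ℕ} (A : Matrix (Fin n) (Fin n) ℝ) : ℝ :=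
  ⨆ i, singVals A i

/-- the positive semidefinite square root, extended by `0` off psd matrices -/
noncomputable def mySqrt {n : ℕ} (A : Matrix (Fin n) (Fin n) ℝ) : Matrix (Fin n) (Fin n) ℝ :=
  open Classical in
  if h : A.PosSemidef then h.sqrt else 0

/-- the weight-dependent incompatibility measure `T[W]` -/
noncomputable def Tmeas {n : ℕ} (W Q U : Matrix (Fin n) (Fin n) ℝ) : ℝ :=
  traceNorm (mySqrt W * Q⁻¹ * U * Q⁻¹ * mySqrt W) / (W * Q⁻¹).trace

/-- the quantumness measure `R` -/
noncomputable def Rmeas {n : ℕ} (Q U : Matrix (Fin n) (Fin n) ℝ) : ℝ :=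
  opNorm (mySqrt Q⁻¹ * U * mySqrt Q⁻¹)

section
open scoped MatrixOrder

lemma Matrix.PosSemidef.sqrt_eq_cfc {n : ℕ} {A : Matrix (Fin n) (Fin n) ℝ} (hA : A.PosSemidef) :
    hA.sqrt = CFC.sqrt A := by
  have h0 : (0 : Matrix (Fin n) (Fin n) ℝ) ≤ A := Matrix.nonneg_iff_posSemidef.2 hA
  rw [CFC.sqrt_eq_real_sqrt A h0, cfcₙ_eq_cfc (hf0 := Real.sqrt_zero), hA.1.cfc_eq, IsHermitian.cfc, Unitary.conjStarAlgAut_apply]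
  rfl

lemma Matrix.PosSemidef.sqrt_mul_self {n : ℕ} {A : Matrix (Fin n) (Fin n) ℝ} (hA : A.PosSemidef) :
    hA.sqrt * hA.sqrt = A := by
  have h0 : (0 : Matrix (Fin n) (Fin n) ℝ) ≤ A := Matrix.nonneg_iff_posSemidef.2 hA
  rw [hA.sqrt_eq_cfc]; exact CFC.sqrt_mul_sqrt_self A h0

lemma Matrix.PosSemidef.sq_sqrt {n : ℕ} {A : Matrix (Fin n) (Fin n) ℝ} (hA : A.PosSemidef) :
    hA.sqrt ^ 2 = A := by
  rw [pow_two]; exact hA.sqrt_mul_self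

lemma Matrix.PosSemidef.eq_of_sq_eq_sq {n : ℕ} {A B : Matrix (Fin n) (Fin n) ℝ}
    (hA : A.PosSemidef) (hB : B.PosSemidef) (h : A ^ 2 = B ^ 2) : A = B := by
  have hA0 : (0 : Matrix (Fin n) (Fin n) ℝ) ≤ A := Matrix.nonneg_iff_posSemidef.2 hA
  have hB0 : (0 : Matrix (Fin n) (Fin n) ℝ) ≤ B := Matrix.nonneg_iff_posSemidef.2 hB
  rw [pow_two, pow_two] at h
  exact (CFC.mul_self_eq_mul_self_iff A B hA0 hB0).1 h

lemma Matrix.PosSemidef.eq_sqrt_of_sq_eq {n : ℕ} {A B : Matrix (Fin n) (Fin n) ℝ}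
    (hB : B.PosSemidef) (hA : A.PosSemidef) (h : B ^ 2 = A) : B = hA.sqrt :=
  hB.eq_of_sq_eq_sq hA.posSemidef_sqrt (by rw [h, hA.sq_sqrt])

end

lemma mySqrt_eq {n : ℕ} {A : Matrix (Fin n) (Fin n) ℝ} (h : A.PosSemidef) :
    mySqrt A = h.sqrt := dif_pos h

lemma psd_smul {n : ℕ} {A : Matrix (Fin n) (Fin n) ℝ} (h : A.PosSemidef)
    {c : ℝ} (hc : 0 ≤ c) : (c • A).PosSemidef := by
  refine ⟨?_, fun x => ?_⟩
  · show (c • A)ᴴ = c • A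
    rw [conjTranspose_smul, h.1.eq, star_trivial]
  · exact (h.smul hc).2 x

lemma mySqrt_smul {n : ℕ} {A : Matrix (Fin n) (Fin n) ℝ} (h : A.PosSemidef)
    {c : ℝ} (hc : 0 ≤ c) : mySqrt (c • A) = Real.sqrt c • mySqrt A := by
  have hcA : (c • A).PosSemidef := psd_smul h hc
  rw [mySqrt_eq hcA, mySqrt_eq h]
  refine ((psd_smul h.posSemidef_sqrt (Real.sqrt_nonneg c)).eq_sqrt_of_sq_eq hcA ?_).symm
  rw [smul_pow, h.sq_sqrt, Real.sq_sqrt hc]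

lemma trace_eq_sum_eigenvalues {n : ℕ} {A : Matrix (Fin n) (Fin n) ℝ} (hA : A.IsHermitian) :
    A.trace = ∑ i, hA.eigenvalues i := by
  conv_lhs => rw [hA.spectral_theorem]
  rw [Unitary.conjStarAlgAut_apply, Matrix.trace_mul_cycle,
    Unitary.coe_star_mul_self, Matrix.one_mul, Matrix.trace_diagonal]
  simp

lemma traceNorm_eq_sum_singVals {n : ℕ} (A : Matrix (Fin n) (Fin n) ℝ) :
    traceNorm A = ∑ i, singVals A i :=
  trace_eq_sum_eigenvalues _

lemma sqrt_congr {n : ℕ} {A B : Matrix (Fin n) (Fin n) ℝ} (hA : A.PosSemidef)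
    (hB : B.PosSemidef) (h : A = B) : hA.sqrt = hB.sqrt := by subst h; rfl

lemma traceNorm_smul {n : ℕ} (A : Matrix (Fin n) (Fin n) ℝ) {c : ℝ} (hc : 0 ≤ c) :
    traceNorm (c • A) = c * traceNorm A := by
  have h1 : (c • A)ᴴ * (c • A) = (c * c) • (Aᴴ * A) := by
    rw [conjTranspose_smul, star_trivial, Matrix.smul_mul, Matrix.mul_smul, smul_smul]
  unfold traceNorm
  rw [sqrt_congr (posSemidef_conjTranspose_mul_self _)
      (psd_smul (posSemidef_conjTranspose_mul_self A) (mul_nonneg hc hc)) h1,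
    ← mySqrt_eq, mySqrt_smul (posSemidef_conjTranspose_mul_self A) (mul_nonneg hc hc),
    Real.sqrt_mul_self hc, mySqrt_eq (posSemidef_conjTranspose_mul_self A), trace_smul,
    smul_eq_mul]

/-- If W Q⁻¹ = c·I with c > 0 and all singular values of Q^{-1/2} U Q^{-1/2} equal its
operator norm, then T[W] = R. -/
theorem Tmeas_eq_Rmeas_of_prop_id {n : ℕ} (W Q U : Matrix (Fin n) (Fin n) ℝ)
    (hW : W.PosDef) (hQ : Q.PosDef) (hU : Uᵀ = -U)
    (c : ℝ) (hc : 0 < c) (hWQ : W * Q⁻¹ = c • (1 : Matrix (Fin n) (Fin n) ℝ))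
    (hsv : ∀ i, singVals (mySqrt Q⁻¹ * U * mySqrt Q⁻¹) i =
        opNorm (mySqrt Q⁻¹ * U * mySqrt Q⁻¹)) :
    Tmeas W Q U = Rmeas Q U := by
  have hQinv : (Q⁻¹).PosDef := hQ.inv
  have hQpsd := hQ.posSemidef
  set B := mySqrt Q with hBdef
  have hBpsd : B.PosSemidef := by rw [hBdef, mySqrt_eq hQpsd]; exact hQpsd.posSemidef_sqrt
  have hB2 : B * B = Q := by rw [hBdef, mySqrt_eq hQpsd]; exact hQpsd.sqrt_mul_self
  have hdetQ : IsUnit Q.det := isUnit_iff_ne_zero.2 (ne_of_gt hQ.det_pos)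
  have hdetB : IsUnit B.det := by
    have hd : B.det * B.det = Q.det := by rw [← det_mul, hB2]
    refine isUnit_iff_ne_zero.2 fun h => ?_
    rw [h, mul_zero] at hd
    exact (ne_of_gt hQ.det_pos) hd.symm
  set S := mySqrt Q⁻¹ with hSdef
  have hSpsd : S.PosSemidef := by
    rw [hSdef, mySqrt_eq hQinv.posSemidef]; exact hQinv.posSemidef.posSemidef_sqrt
  have hS2 : S * S = Q⁻¹ := by
    rw [hSdef, mySqrt_eq hQinv.posSemidef]; exact hQinv.posSemidef.sqrt_mul_self
  have hBinvpsd : (B⁻¹).PosSemidef := hBpsd.inv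
  have hSB : S = B⁻¹ := by
    apply hSpsd.eq_of_sq_eq_sq hBinvpsd
    rw [pow_two, pow_two, hS2, ← Matrix.mul_inv_rev, hB2]
  have hBQ : B * Q⁻¹ = S := by
    rw [hSB, ← hB2, Matrix.mul_inv_rev, ← Matrix.mul_assoc,
      Matrix.mul_nonsing_inv _ hdetB, Matrix.one_mul]
  have hQB : Q⁻¹ * B = S := by
    rw [hSB, ← hB2, Matrix.mul_inv_rev, Matrix.mul_assoc,
      Matrix.nonsing_inv_mul _ hdetB, Matrix.mul_one]
  have hW' : W = c • Q := by
    calc W = W * (Q⁻¹ * Q) := by rw [Matrix.nonsing_inv_mul _ hdetQ, Matrix.mul_one]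
    _ = (W * Q⁻¹) * Q := by rw [Matrix.mul_assoc]
    _ = c • Q := by rw [hWQ, Matrix.smul_mul, Matrix.one_mul]
  have hsqW : mySqrt W = Real.sqrt c • B := by
    rw [hW', hBdef, mySqrt_smul hQpsd hc.le]
  have hM : mySqrt W * Q⁻¹ * U * Q⁻¹ * mySqrt W = c • (S * U * S) := by
    rw [hsqW]
    simp only [Matrix.smul_mul, Matrix.mul_smul, smul_smul, Real.mul_self_sqrt hc.le]
    congr 1
    rw [hBQ, Matrix.mul_assoc (S * U), hQB]
  unfold Tmeas Rmeas
  rw [hM, hWQ, trace_smul, trace_one, traceNorm_smul _ hc.le, traceNorm_eq_sum_singVals]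
  simp only [hsv]
  rw [Finset.sum_const, Finset.card_univ, Fintype.card_fin, nsmul_eq_mul, smul_eq_mul, ← hSdef]
  rcases Nat.eq_zero_or_pos n with h0 | hpos
  · subst h0
    simp [opNorm, Real.iSup_of_isEmpty]
  · have hn : (n : ℝ) ≠ 0 := Nat.cast_ne_zero.2 (hpos).ne'
    field_simp
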